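/- Let s ∈ ℕ, let V be a finite-dimensional normed complex vector space, let L : (ℂ²)^{⊗s} →ₗ[ℂ] V be a linear map, and let g_j : ℝ → ℝ (j = 1,…,s) each be differentiable at θ₀ ∈ ℝ. Then the function θ ↦ L(⊗_{j=1}^s (e₀ + exp(i·g_j(θ))·e₁)) is differentiable at θ₀ with derivative i · Σ_{j=1}^s g_j'(θ₀) · exp(i·g_j(θ₀)) · L(v_1 ⊗ ⋯ ⊗ v_s), where v_j = e₁ and v_l = e₀ + exp(i·g_l(θ₀))·e₁ for l ≠ j. (This expresses the derivative of any parameterised ZX diagram with phases g_j(θ) as a single diagram.) -/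

import Mathlib

open scoped TensorProduct

noncomputable section

/-- `ℂ²` with standard basis vectors. -/
abbrev C2 : Type := ℂ × ℂ

def e0 : C2 := (1, 0)
def e1 : C2 := (0, 1)

/-- Any multilinear map on finitely many copies of `C2` is continuous. -/
lemma multilinear_C2_continuous {s : ℕ} {V : Type*} [NormedAddCommGroup V]
    [NormedSpace ℂ V] (m : MultilinearMap ℂ (fun _ : Fin s => C2) V) :
    Continuous m := by
  classical
  have key : ∀ v : Fin s → C2,
      m v = ∑ k : Fin s → Fin 2,
        (∏ i, if k i = 0 then (v i).1 else (v i).2) •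
          m (fun i => if k i = 0 then e0 else e1) := by
    intro v
    have hv : ∀ i, v i = ∑ j : Fin 2,
        (if j = 0 then (v i).1 else (v i).2) • (if j = 0 then e0 else e1) := by
      intro i
      simp [Fin.sum_univ_two, e0, e1, Prod.ext_iff]
    calc m v = m (fun i => ∑ j : Fin 2,
          (if j = 0 then (v i).1 else (v i).2) • (if j = 0 then e0 else e1)) := by
            congr 1; funext i; exact hv i
      _ = ∑ k : Fin s → Fin 2,
          m (fun i => (if k i = 0 then (v i).1 else (v i).2) •
            (if k i = 0 then e0 else e1)) := by
            rw [m.map_sum]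
      _ = ∑ k : Fin s → Fin 2,
          (∏ i, if k i = 0 then (v i).1 else (v i).2) •
            m (fun i => if k i = 0 then e0 else e1) := by
            refine Finset.sum_congr rfl fun k _ => ?_
            exact m.map_smul_univ _ _
  have : (⇑m) = fun v : Fin s → C2 => ∑ k : Fin s → Fin 2,
      (∏ i, if k i = 0 then (v i).1 else (v i).2) •
        m (fun i => if k i = 0 then e0 else e1) := funext key
  rw [this]
  refine continuous_finset_sum _ fun k _ => ?_
  refine Continuous.smul ?_ continuous_const
  refine continuous_finset_prod _ fun i _ => ?_
  by_cases h : k i = 0 <;> simp only [h, if_true, if_false] <;>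
    [exact (continuous_fst.comp (continuous_apply i));
     exact (continuous_snd.comp (continuous_apply i))]

/-- the derivative of any parameterised ZX diagram with phases
`g_j θ` expressed as a single diagram. -/
theorem deriv_parameterised_zx_diagram (s : ℕ) (V : Type*) [NormedAddCommGroup V]
    [NormedSpace ℂ V] [FiniteDimensional ℂ V]
    (L : (⨂[ℂ] _ : Fin s, C2) →ₗ[ℂ] V)
    (g : Fin s → ℝ → ℝ) (g' : Fin s → ℝ) (θ₀ : ℝ)
    (hg : ∀ j, HasDerivAt (g j) (g' j) θ₀) :
    HasDerivAt
      (fun θ : ℝ => L (⨂ₜ[ℂ] j, (e0 + Complex.exp (Complex.I * (g j θ : ℂ)) • e1)))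
      (Complex.I • ∑ j : Fin s,
        ((g' j : ℂ) * Complex.exp (Complex.I * (g j θ₀ : ℂ))) •
          L (⨂ₜ[ℂ] l,
            (if l = j then e1 else e0 + Complex.exp (Complex.I * (g l θ₀ : ℂ)) • e1)))
      θ₀ := by
  classical
  set m : MultilinearMap ℂ (fun _ : Fin s => C2) V :=
    L.compMultilinearMap (PiTensorProduct.tprod ℂ) with hm
  set M : ContinuousMultilinearMap ℂ (fun _ : Fin s => C2) V :=
    ⟨m, multilinear_C2_continuous m⟩ with hM
  -- the curve
  set c : ℝ → (Fin s → C2) :=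
    fun θ j => e0 + Complex.exp (Complex.I * (g j θ : ℂ)) • e1 with hc
  set c' : Fin s → C2 :=
    fun j => (Complex.I * (g' j : ℂ) * Complex.exp (Complex.I * (g j θ₀ : ℂ))) • e1
    with hc'
  have hcurve : HasDerivAt c c' θ₀ := by
    rw [hasDerivAt_pi]
    intro j
    have h1 : HasDerivAt (fun θ : ℝ => ((g j θ : ℂ))) ((g' j : ℂ)) θ₀ :=
      (hg j).ofReal_comp
    have h2 : HasDerivAt (fun θ : ℝ => Complex.I * (g j θ : ℂ))
        (Complex.I * (g' j : ℂ)) θ₀ := h1.const_mul Complex.I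
    have h3 := h2.cexp
    have h4 := (h3.smul_const e1).const_add e0
    show HasDerivAt (fun θ => e0 + Complex.exp (Complex.I * (g j θ : ℂ)) • e1)
      ((Complex.I * (g' j : ℂ) * Complex.exp (Complex.I * (g j θ₀ : ℂ))) • e1) θ₀
    have he : (Complex.exp (Complex.I * (g j θ₀ : ℂ)) * (Complex.I * (g' j : ℂ))) • e1
        = (Complex.I * (g' j : ℂ) * Complex.exp (Complex.I * (g j θ₀ : ℂ))) • e1 := by
      rw [mul_comm]
    rw [← he]
    exact h4
  have hM' : HasDerivAt (fun θ => M (c θ)) (M.linearDeriv (c θ₀) c') θ₀ := by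
    have hF : HasFDerivAt (⇑M) (M.linearDeriv (c θ₀)) (c θ₀) := M.hasFDerivAt (c θ₀)
    have hF' := (hF.restrictScalars ℝ).comp_hasDerivAt θ₀ hcurve
    simpa [Function.comp_def] using hF'
  have hfun : (fun θ : ℝ =>
      L (⨂ₜ[ℂ] j, (e0 + Complex.exp (Complex.I * (g j θ : ℂ)) • e1))) =
      fun θ => M (c θ) := by
    funext θ; rfl
  rw [hfun]
  convert hM' using 1
  rw [ContinuousMultilinearMap.linearDeriv_apply]
  rw [Finset.smul_sum]
  refine Finset.sum_congr rfl fun j _ => ?_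
  have hsmul : M (Function.update (c θ₀) j (c' j)) =
      (Complex.I * (g' j : ℂ) * Complex.exp (Complex.I * (g j θ₀ : ℂ))) •
        M (Function.update (c θ₀) j e1) :=
    M.map_update_smul (c θ₀) j
      (Complex.I * (g' j : ℂ) * Complex.exp (Complex.I * (g j θ₀ : ℂ))) e1
  rw [hsmul]
  have hup : Function.update (c θ₀) j e1 =
      fun l => if l = j then e1 else
        e0 + Complex.exp (Complex.I * (g l θ₀ : ℂ)) • e1 := by
    funext l
    rw [Function.update_apply]
  have hMe : M (Function.update (c θ₀) j e1) =
      L (⨂ₜ[ℂ] l, (if l = j then e1 else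
        e0 + Complex.exp (Complex.I * (g l θ₀ : ℂ)) • e1)) := by
    rw [hup]; rfl
  rw [hMe, smul_smul, mul_assoc]
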